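/- Let Λ : Q → k^× be a group homomorphism from the root lattice Q of a root system Φ to the multiplicative group of a field k containing an element q that is not a root of unity, and suppose that for some positive root α and positive integer m one has q^{2(ρ,α) − m(α,α)} · Λ(2α) = 1. Then the homomorphism Λ' : Q → k^× defined by Λ'(μ) = q^{(s_αρ − ρ, μ)} · Λ(s_α μ) · σ(μ), where σ(μ) = (−1)^{⟨μ,α∨⟩} if Λ(α) ∈ −q^{(1/2)ℤ(α,α)} and σ(μ) = 1 otherwise, satisfies Λ'(μ) = q^{−m(α,μ)} Λ(μ) for all μ ∈ Q. -/

import Mathlib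

/-- Let `Λ : Q → k^×` be a group homomorphism from the root lattice `Q` (with integral
`W`-invariant pairing `B`, `r μ = (ρ, μ)`, and `p μ = ⟨μ, α∨⟩`) to the multiplicative
group of a field `k` containing an element `q` that is not a root of unity. Suppose that
`q^{2(ρ,α) − m(α,α)} Λ(2α) = 1` for a positive root `α` and `m ∈ ℕ₊`. Then the modified
homomorphism `Λ'(μ) = q^{(s_αρ − ρ, μ)} Λ(s_α μ) σ(μ)` (where
`(s_αρ − ρ, μ) = r(s_α μ) − r(μ)`, and `σ(μ) = (−1)^{⟨μ,α∨⟩}` if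
`Λ(α) ∈ −q^{(1/2)ℤ(α,α)}` and `σ(μ) = 1` otherwise) satisfies
`Λ'(μ) = q^{−m(α,μ)} Λ(μ)` for all `μ ∈ Q`. -/
theorem stmt_16 {k : Type*} [Field k] (q : kˣ)
    (hq : ∀ n : ℕ, 0 < n → q ^ n ≠ 1)
    {Q : Type*} [AddCommGroup Q]
    (B : Q → Q → ℤ)
    (hBsymm : ∀ x y, B x y = B y x)
    (hBadd : ∀ x y z, B (x + y) z = B x z + B y z)
    (r : Q →+ ℤ)
    (α : Q) (e : ℤ) (he : B α α = 2 * e) (hα : B α α ≠ 0)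
    (s : ℤ) (hs : r α = e * s)
    (p : Q →+ ℤ) (hp : ∀ μ : Q, B α α * p μ = 2 * B μ α)
    (m : ℕ) (hm : 0 < m)
    (Λ : Q → kˣ) (hΛ : ∀ x y : Q, Λ (x + y) = Λ x * Λ y)
    (hkey : q ^ (2 * r α - (m : ℤ) * B α α) * Λ (α + α) = 1)
    (σ : Q → kˣ)
    (hσ1 : (∃ t : ℤ, Λ α = -q ^ (t * e)) → ∀ μ : Q, σ μ = (-1 : kˣ) ^ p μ)
    (hσ2 : (¬ ∃ t : ℤ, Λ α = -q ^ (t * e)) → ∀ μ : Q, σ μ = 1) :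
    ∀ μ : Q, q ^ (r (μ - p μ • α) - r μ) * Λ (μ - p μ • α) * σ μ
      = q ^ (-(m : ℤ) * B α μ) * Λ μ := by
  intro μ
  have he0 : e ≠ 0 := fun h => hα (by rw [he, h]; ring)
  have hinj : ∀ n : ℤ, q ^ n = 1 → n = 0 := by
    intro n hn
    by_contra h
    have h1 : q ^ n.natAbs = 1 := by
      rcases Int.natAbs_eq n with h2 | h2
      · rw [← zpow_natCast, ← h2, hn]
      · have : (n.natAbs : ℤ) = -n := by omega
        rw [← zpow_natCast, this, zpow_neg, hn, inv_one]
    exact hq n.natAbs (by omega) h1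
  -- Λ of integer multiples
  have hLz : ∀ (n : ℤ) (x : Q), Λ (n • x) = Λ x ^ n := by
    intro n x
    have := map_zsmul (AddMonoidHom.mk' (fun y => Additive.ofMul (Λ y)) hΛ) n x
    exact this
  set E : ℤ := e * ((m : ℤ) - s) with hE
  -- the square identity
  have hsq : Λ α * Λ α = q ^ E * q ^ E := by
    have h1 : Λ (α + α) = Λ α * Λ α := hΛ α α
    rw [h1, hs, he] at hkey
    have : Λ α * Λ α = (q ^ (2 * (e * s) - (m : ℤ) * (2 * e)))⁻¹ := by
      exact eq_inv_of_mul_eq_one_left (by rw [mul_comm] at hkey; exact hkey)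
    rw [this, ← zpow_neg, ← zpow_add]
    congr 1
    ring
  have hBαμ : B α μ = e * p μ := by
    have h := hp μ
    rw [he, hBsymm μ α] at h
    linarith
  obtain ⟨ε, hε1, hε2⟩ : ∃ ε : kˣ, Λ α = ε * q ^ E ∧ σ μ = ε ^ (p μ) := by
    by_cases hc : ∃ t : ℤ, Λ α = -q ^ (t * e)
    · obtain ⟨t, ht⟩ := hc
      refine ⟨-1, ?_, hσ1 ⟨t, ht⟩ μ⟩
      have h2 : q ^ (t * e) * q ^ (t * e) = q ^ E * q ^ E := by
        have := hsq
        rw [ht] at this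
        simpa [neg_mul_neg] using this
      have h3 : q ^ (t * e + t * e - (E + E)) = 1 := by
        rw [zpow_sub, zpow_add, zpow_add, h2, mul_inv_cancel]
      have h4 := hinj _ h3
      have h5 : t * e = E := by
        have h6 : (2 : ℤ) * (t * e) = 2 * E := by omega
        omega
      rw [ht, h5, neg_one_mul]
    · refine ⟨1, ?_, by rw [one_zpow]; exact hσ2 hc μ⟩
      have h2 : (Λ α * (q ^ E)⁻¹) * (Λ α * (q ^ E)⁻¹) = 1 := by
        have : Λ α * (q ^ E)⁻¹ * (Λ α * (q ^ E)⁻¹)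
            = (Λ α * Λ α) * ((q ^ E * q ^ E))⁻¹ := by
          rw [mul_inv]
          exact mul_mul_mul_comm _ _ _ _
        rw [this, hsq, mul_inv_cancel]
      have h3 : ((Λ α * (q ^ E)⁻¹ : kˣ) : k) = 1 ∨ ((Λ α * (q ^ E)⁻¹ : kˣ) : k) = -1 := by
        rw [← mul_self_eq_one_iff]
        simpa using congrArg (Units.val) h2
      rcases h3 with h4 | h4
      · have : Λ α * (q ^ E)⁻¹ = 1 := Units.ext (by simpa using h4)
        rw [one_mul]
        exact mul_inv_eq_one.mp this
      · exfalso
        apply hc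
        refine ⟨(m : ℤ) - s, ?_⟩
        have : Λ α * (q ^ E)⁻¹ = -1 := Units.ext (by simpa using h4)
        have h5 : Λ α = -q ^ E := by
          have := congrArg (· * q ^ E) this
          simpa [mul_assoc, neg_one_mul] using this
        rw [h5, hE, mul_comm]
  -- main computation
  have hr : r (μ - p μ • α) = r μ - p μ * (e * s) := by
    rw [map_sub, map_zsmul, hs, smul_eq_mul]
  have hL : Λ (μ - p μ • α) = Λ μ * Λ α ^ (-(p μ)) := by
    rw [sub_eq_add_neg, ← neg_smul, hΛ, hLz]
  rw [hr, hL, hε1, hε2, hBαμ]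
  set n : ℤ := p μ with hn
  have expand : (ε * q ^ E) ^ (-n) = ε ^ (-n) * q ^ (E * (-n)) := by
    rw [mul_zpow, ← zpow_mul]
  rw [expand]
  have hεcancel : ε ^ (-n) * ε ^ n = 1 := by
    rw [← zpow_add, neg_add_cancel, zpow_zero]
  calc q ^ (r μ - n * (e * s) - r μ) * (Λ μ * (ε ^ (-n) * q ^ (E * (-n)))) * ε ^ n
      = (ε ^ (-n) * ε ^ n) * (q ^ (r μ - n * (e * s) - r μ) * q ^ (E * (-n))) * Λ μ := by
        simp only [mul_comm, mul_assoc, mul_left_comm]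
    _ = q ^ (r μ - n * (e * s) - r μ + E * (-n)) * Λ μ := by
        rw [hεcancel, one_mul, ← zpow_add]
    _ = q ^ (-(m : ℤ) * (e * n)) * Λ μ := by
        congr 1
        rw [hE]; ring
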